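/- Let t ∈ [0,T], λ ∈ [0,1], p : cl(Ω) → ℝⁿ continuous, and m a Borel measure on cl(Ω) with m(cl(Ω)) ≤ 1. Suppose that for every continuous α : cl(Ω) → ℝⁿ the map x ↦ D_pH(t,x,p(x),(I,α)#m) is continuous, and that there are constants q₀ ∈ [1,∞) and L₁ ∈ (0,1) such that for all (t,x,p), every Borel measure ρ on cl(Ω) with ρ(cl(Ω)) ≤ 1, and all bounded continuous α₁, α₂ : cl(Ω) → ℝⁿ one has |D_pH(t,x,p,(I,α₁)#ρ) − D_pH(t,x,p,(I,α₂)#ρ)| ≤ L₁ ‖α₁ − α₂‖_{L^{q₀}(ρ)}. Then there exists a unique continuous map α : cl(Ω) → ℝⁿ satisfying α(x) = −λ D_pH(t,x,p(x),(I,α)#m) for every x ∈ cl(Ω); consequently μ := (I,α)#m is the unique measure of the form (I,α')#m with α' continuous that satisfies the fixed-point relation μ = (I, −λ D_pH(t,·,p(·),μ))#m. -/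

import Mathlib

open Set MeasureTheory Filter
open scoped RealInnerProductSpace ENNReal Topology

noncomputable section

namespace MFG

/-- Euclidean space `ℝⁿ`. -/
abbrev Euc (n : ℕ) := EuclideanSpace ℝ (Fin n)

variable {n : ℕ}

/-- The pushforward `(I,α)#m` of a measure `m` under `x ↦ (x, α x)`. -/
def pushfwd (m : Measure (Euc n)) (α : Euc n → Euc n) : Measure (Euc n × Euc n) :=
  Measure.map (fun x => (x, α x)) m

/-- `Λ_q(μ) = (∫ |α|^q dμ(x,α))^{1/q}`. -/
def LambdaQ (q : ℝ) (μ : Measure (Euc n × Euc n)) : ℝ :=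
  (∫ z, ‖z.2‖ ^ q ∂μ) ^ (1 / q)

/-- `Λ_∞(μ)`: the smallest `R ≥ 0` such that `μ` is supported in `{|α| ≤ R}`. -/
def LambdaInf (μ : Measure (Euc n × Euc n)) : ℝ :=
  sInf {R : ℝ | 0 ≤ R ∧ μ {z : Euc n × Euc n | R < ‖z.2‖} = 0}

/-- `L^q(ρ)` norm of a vector field. -/
def LqNormV (q : ℝ) (ρ : Measure (Euc n)) (f : Euc n → Euc n) : ℝ :=
  (∫ x, ‖f x‖ ^ q ∂ρ) ^ (1 / q)

/-- `L^q(ρ)` norm of a scalar function. -/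
def LqNormR (q : ℝ) (ρ : Measure (Euc n)) (f : Euc n → ℝ) : ℝ :=
  (∫ x, |f x| ^ q ∂ρ) ^ (1 / q)

/-- The bounded-Lipschitz metric `d*` on measures on `cl(Ω) × ℝⁿ`. -/
def dstar (μ ν : Measure (Euc n × Euc n)) : ℝ :=
  sSup {r : ℝ | ∃ φ : Euc n × Euc n → ℝ, LipschitzWith 1 φ ∧ (∀ z, |φ z| ≤ 1) ∧
    r = (∫ z, φ z ∂μ) - ∫ z, φ z ∂ν}

/-- The bounded-Lipschitz metric `d*` on measures on `cl(Ω)`. -/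
def dstarX (μ ν : Measure (Euc n)) : ℝ :=
  sSup {r : ℝ | ∃ φ : Euc n → ℝ, LipschitzWith 1 φ ∧ (∀ z, |φ z| ≤ 1) ∧
    r = (∫ z, φ z ∂μ) - ∫ z, φ z ∂ν}

/-- The measure `f dx` on `Ω` with Lebesgue density `f`. -/
def densMeas (Ω : Set (Euc n)) (f : Euc n → ℝ) : Measure (Euc n) :=
  (volume.restrict Ω).withDensity fun x => ENNReal.ofReal (f x)

/-- `∂_t u`. -/
def pderivT (u : ℝ → Euc n → ℝ) (t : ℝ) (x : Euc n) : ℝ :=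
  deriv (fun s => u s x) t

/-- `D_x u`, the spatial gradient. -/
def spaceGrad (u : ℝ → Euc n → ℝ) (t : ℝ) (x : Euc n) : Euc n :=
  gradient (u t) x

/-- The Laplacian of a function on `ℝⁿ`. -/
def lapl (f : Euc n → ℝ) (x : Euc n) : ℝ :=
  ∑ i : Fin n, fderiv ℝ (fun y => fderiv ℝ f y (EuclideanSpace.single i 1)) x
    (EuclideanSpace.single i 1)

/-- The (spatial) divergence of a vector field on `ℝⁿ`. -/
def divg (F : Euc n → Euc n) (x : Euc n) : ℝ :=
  ∑ i : Fin n, fderiv ℝ (fun y => F y i) x (EuclideanSpace.single i 1)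

/-- `u ∈ C^{1,2}(Q)`: continuous on `Q = [0,T] × cl(Ω)`, once differentiable in time,
twice in space. -/
def C12 (T : ℝ) (Ω : Set (Euc n)) (u : ℝ → Euc n → ℝ) : Prop :=
  ContinuousOn (fun z : ℝ × Euc n => u z.1 z.2) (Icc 0 T ×ˢ closure Ω) ∧
  ∀ t ∈ Icc (0:ℝ) T, ∀ x ∈ closure Ω,
    DifferentiableAt ℝ (fun s => u s x) t ∧ ContDiffAt ℝ 2 (u t) x

/-- `sup_Q v`. -/
def supQ (T : ℝ) (Ω : Set (Euc n)) (v : ℝ → Euc n → ℝ) : ℝ :=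
  sSup ((fun z : ℝ × Euc n => v z.1 z.2) '' (Icc 0 T ×ˢ closure Ω))

/-- `sup_{cl Ω} v`. -/
def supX (Ω : Set (Euc n)) (v : Euc n → ℝ) : ℝ :=
  sSup (v '' closure Ω)

/-- `N` is the outward unit normal vector field on `∂Ω`. -/
def OutwardNormal (Ω : Set (Euc n)) (N : Euc n → Euc n) : Prop :=
  ∀ x ∈ frontier Ω, ‖N x‖ = 1 ∧
    ∀ᶠ s : ℝ in 𝓝[>] (0:ℝ), x + s • N x ∉ closure Ω ∧ x - s • N x ∈ Ω

/-- `Θ_θ(μ)`: pushforward of `μ` under `(x,α) ↦ (x, α/θ)`. -/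
def Theta (θ : ℝ) (μ : Measure (Euc n × Euc n)) : Measure (Euc n × Euc n) :=
  Measure.map (fun z : Euc n × Euc n => (z.1, θ⁻¹ • z.2)) μ

/-- `L^θ(t,x,α,μ) = θ L(t,x,α/θ,Θ_θ(μ))`. -/
def Ltheta (L : ℝ → Euc n → Euc n → Measure (Euc n × Euc n) → ℝ)
    (θ t : ℝ) (x a : Euc n) (μ : Measure (Euc n × Euc n)) : ℝ :=
  θ * L t x (θ⁻¹ • a) (Theta θ μ)

/-- `H^θ`, the Legendre transform of `L^θ` in the velocity variable. -/
def Htheta (L : ℝ → Euc n → Euc n → Measure (Euc n × Euc n) → ℝ)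
    (θ t : ℝ) (x p : Euc n) (μ : Measure (Euc n × Euc n)) : ℝ :=
  ⨆ a : Euc n, (⟪p, a⟫ - Ltheta L θ t x a μ)

/-- Sequential continuity on `[0,T] × cl(Ω) × ℝⁿ × 𝔐_{∞,R}(cl(Ω)×ℝⁿ)` (every `R`),
the measure argument carrying the metric `d*` (scalar-valued version). -/
def MContR (T : ℝ) (Ω : Set (Euc n))
    (F : ℝ → Euc n → Euc n → Measure (Euc n × Euc n) → ℝ) : Prop :=
  ∀ R > (0:ℝ), ∀ (tk : ℕ → ℝ) (xk pk : ℕ → Euc n)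
    (μk : ℕ → Measure (Euc n × Euc n)) (t : ℝ) (x p : Euc n)
    (μ : Measure (Euc n × Euc n)),
    (∀ k, tk k ∈ Icc 0 T) → t ∈ Icc 0 T →
    (∀ k, xk k ∈ closure Ω) → x ∈ closure Ω →
    (∀ k, μk k Set.univ ≤ 1 ∧ μk k {z : Euc n × Euc n | R < ‖z.2‖} = 0) →
    μ Set.univ ≤ 1 → μ {z : Euc n × Euc n | R < ‖z.2‖} = 0 →
    Tendsto tk atTop (𝓝 t) → Tendsto xk atTop (𝓝 x) → Tendsto pk atTop (𝓝 p) →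
    Tendsto (fun k => dstar (μk k) μ) atTop (𝓝 0) →
    Tendsto (fun k => F (tk k) (xk k) (pk k) (μk k)) atTop (𝓝 (F t x p μ))

/-- Sequential continuity (vector-valued version). -/
def MContV (T : ℝ) (Ω : Set (Euc n))
    (F : ℝ → Euc n → Euc n → Measure (Euc n × Euc n) → Euc n) : Prop :=
  ∀ R > (0:ℝ), ∀ (tk : ℕ → ℝ) (xk pk : ℕ → Euc n)
    (μk : ℕ → Measure (Euc n × Euc n)) (t : ℝ) (x p : Euc n)
    (μ : Measure (Euc n × Euc n)),
    (∀ k, tk k ∈ Icc 0 T) → t ∈ Icc 0 T →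
    (∀ k, xk k ∈ closure Ω) → x ∈ closure Ω →
    (∀ k, μk k Set.univ ≤ 1 ∧ μk k {z : Euc n × Euc n | R < ‖z.2‖} = 0) →
    μ Set.univ ≤ 1 → μ {z : Euc n × Euc n | R < ‖z.2‖} = 0 →
    Tendsto tk atTop (𝓝 t) → Tendsto xk atTop (𝓝 x) → Tendsto pk atTop (𝓝 p) →
    Tendsto (fun k => dstar (μk k) μ) atTop (𝓝 0) →
    Tendsto (fun k => F (tk k) (xk k) (pk k) (μk k)) atTop (𝓝 (F t x p μ))

end MFG

open MFG

private lemma lq_bound {n : ℕ} (m : Measure (Euc n)) [IsFiniteMeasure m]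
    (hm1 : m Set.univ ≤ 1) (q₀ : ℝ) (hq₀ : 1 ≤ q₀) (f : Euc n → Euc n) (C : ℝ) (hC : 0 ≤ C)
    (hae : ∀ᵐ x ∂m, ‖f x‖ ≤ C) : LqNormV q₀ m f ≤ C := by
  have hq0 : (0:ℝ) < q₀ := lt_of_lt_of_le one_pos hq₀
  have hb : ∀ᵐ x ∂m, ‖‖f x‖ ^ q₀‖ ≤ C ^ q₀ := by
    filter_upwards [hae] with x hx
    rw [Real.norm_eq_abs, abs_of_nonneg (Real.rpow_nonneg (norm_nonneg _) _)]
    exact Real.rpow_le_rpow (norm_nonneg _) hx hq0.le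
  have h1 : ∫ x, ‖f x‖ ^ q₀ ∂m ≤ C ^ q₀ * (m Set.univ).toReal :=
    le_trans (le_abs_self _)
      (by rw [← Real.norm_eq_abs]; exact norm_integral_le_of_norm_le_const hb)
  have h2 : (m Set.univ).toReal ≤ 1 := by
    have := ENNReal.toReal_mono (by simp) hm1
    simpa using this
  have h3 : ∫ x, ‖f x‖ ^ q₀ ∂m ≤ C ^ q₀ := by
    have hCq : 0 ≤ C ^ q₀ := Real.rpow_nonneg hC _
    nlinarith [ENNReal.toReal_nonneg (a := m Set.univ)]
  have h4 : LqNormV q₀ m f ≤ (C ^ q₀) ^ (1/q₀) :=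
    Real.rpow_le_rpow (integral_nonneg fun x => Real.rpow_nonneg (norm_nonneg _) _) h3
      (by positivity)
  have h5 : (C ^ q₀) ^ (1/q₀) = C := by
    rw [← Real.rpow_mul hC, mul_one_div_cancel hq0.ne', Real.rpow_one]
  rw [h5] at h4; exact h4

open scoped Classical in
private def extK {n : ℕ} (K : Set (Euc n)) (β : C(K, Euc n)) : Euc n → Euc n :=
  fun x => if h : x ∈ K then β ⟨x, h⟩ else 0

private lemma extK_restrict {n : ℕ} (K : Set (Euc n)) (β : C(K, Euc n)) :
    K.restrict (extK K β) = ⇑β := by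
  funext x; exact dif_pos x.2

private lemma extK_apply {n : ℕ} {K : Set (Euc n)} (β : C(K, Euc n)) {x : Euc n}
    (hx : x ∈ K) : extK K β x = β ⟨x, hx⟩ := by
  simp [extK, hx]

private lemma extK_continuousOn {n : ℕ} (K : Set (Euc n)) (β : C(K, Euc n)) :
    ContinuousOn (extK K β) K := by
  rw [continuousOn_iff_continuous_restrict]
  convert β.continuous using 1; exact extK_restrict K β

/-- existence and uniqueness of the continuous fixed point
`α(x) = −λ D_pH(t,x,p(x),(I,α)#m)`, and hence of the fixed-point measure
`μ = (I,−λD_pH(t,·,p(·),μ))#m` among measures of this form. -/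
theorem stmt_0
    {n : ℕ} (hn : 1 ≤ n) (T : ℝ) (hT : 0 < T)
    (Ω : Set (Euc n)) (hΩo : IsOpen Ω) (hΩb : Bornology.IsBounded Ω) (hΩne : Ω.Nonempty)
    (DpH : ℝ → Euc n → Euc n → Measure (Euc n × Euc n) → Euc n)
    (t : ℝ) (ht : t ∈ Icc 0 T) (lam : ℝ) (hlam : lam ∈ Icc (0:ℝ) 1)
    (p : Euc n → Euc n) (hp : ContinuousOn p (closure Ω))
    (m : Measure (Euc n)) (hm1 : m Set.univ ≤ 1) (hmsupp : m ((closure Ω)ᶜ) = 0)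
    -- for every continuous `α`, `x ↦ D_pH(t,x,p(x),(I,α)#m)` is continuous
    (hcont : ∀ α : Euc n → Euc n, ContinuousOn α (closure Ω) →
      ContinuousOn (fun x => DpH t x (p x) (pushfwd m α)) (closure Ω))
    (q₀ L₁ : ℝ) (hq₀ : 1 ≤ q₀) (hL₁ : L₁ ∈ Ioo (0:ℝ) 1)
    -- contraction estimate in the control variable
    (hLip : ∀ (s : ℝ) (x pp : Euc n) (ρ : Measure (Euc n)),
      ρ Set.univ ≤ 1 → ρ ((closure Ω)ᶜ) = 0 →
      ∀ α₁ α₂ : Euc n → Euc n,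
        ContinuousOn α₁ (closure Ω) → ContinuousOn α₂ (closure Ω) →
        (∃ C, ∀ y ∈ closure Ω, ‖α₁ y‖ ≤ C) → (∃ C, ∀ y ∈ closure Ω, ‖α₂ y‖ ≤ C) →
        ‖DpH s x pp (pushfwd ρ α₁) - DpH s x pp (pushfwd ρ α₂)‖ ≤
          L₁ * LqNormV q₀ ρ (fun y => α₁ y - α₂ y)) :
    -- existence of a continuous fixed point
    (∃ α : Euc n → Euc n, ContinuousOn α (closure Ω) ∧
        ∀ x ∈ closure Ω, α x = -(lam • DpH t x (p x) (pushfwd m α))) ∧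
    -- uniqueness of the fixed point, and of the associated measure `μ = (I,α)#m`
    (∀ α₁ α₂ : Euc n → Euc n,
        ContinuousOn α₁ (closure Ω) → ContinuousOn α₂ (closure Ω) →
        (∀ x ∈ closure Ω, α₁ x = -(lam • DpH t x (p x) (pushfwd m α₁))) →
        (∀ x ∈ closure Ω, α₂ x = -(lam • DpH t x (p x) (pushfwd m α₂))) →
        EqOn α₁ α₂ (closure Ω) ∧ pushfwd m α₁ = pushfwd m α₂) := by
  classical
  set K := closure Ω with hK
  have hKc : IsCompact K := hΩb.isCompact_closure
  have hKne : K.Nonempty := hΩne.closure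
  haveI : CompactSpace ↥K := isCompact_iff_compactSpace.mp hKc
  haveI : IsFiniteMeasure m := ⟨lt_of_le_of_lt hm1 ENNReal.one_lt_top⟩
  have haeK : ∀ᵐ x ∂m, x ∈ K := by
    rw [ae_iff]
    exact hmsupp
  have hlam0 : 0 ≤ lam := hlam.1
  have hlam1 : lam ≤ 1 := hlam.2
  have hL₁0 : 0 < L₁ := hL₁.1
  -- boundedness of extensions / continuous functions on K
  have hbdd : ∀ (f : Euc n → Euc n), ContinuousOn f K → ∃ C, ∀ y ∈ K, ‖f y‖ ≤ C := by
    intro f hf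
    obtain ⟨x₀, hx₀, hmax⟩ := hKc.exists_isMaxOn hKne hf.norm
    exact ⟨‖f x₀‖, fun y hy => hmax hy⟩
  -- The fixed point map Φ on C(K, Euc n)
  set Φ : C(K, Euc n) → C(K, Euc n) := fun β =>
    ⟨fun x => -(lam • DpH t x.1 (p x.1) (pushfwd m (extK K β))),
     by
      have h := hcont (extK K β) (extK_continuousOn K β)
      exact ((continuousOn_iff_continuous_restrict.mp h).const_smul lam).neg⟩ with hΦ
  have hΦapp : ∀ (β : C(K, Euc n)) (x : K),
      Φ β x = -(lam • DpH t x.1 (p x.1) (pushfwd m (extK K β))) := fun _ _ => rfl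
  -- contraction estimate
  have hcontr : ∀ β₁ β₂ : C(K, Euc n), dist (Φ β₁) (Φ β₂) ≤ L₁ * dist β₁ β₂ := by
    intro β₁ β₂
    rw [ContinuousMap.dist_le (mul_nonneg hL₁0.le dist_nonneg)]
    intro x
    have hlq : LqNormV q₀ m (fun y => extK K β₁ y - extK K β₂ y) ≤ dist β₁ β₂ := by
      refine lq_bound m hm1 q₀ hq₀ _ _ dist_nonneg ?_
      filter_upwards [haeK] with y hy
      have h1 : extK K β₁ y = β₁ ⟨y, hy⟩ := extK_apply β₁ hy
      have h2 : extK K β₂ y = β₂ ⟨y, hy⟩ := extK_apply β₂ hy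
      rw [h1, h2, ← dist_eq_norm]
      exact ContinuousMap.dist_apply_le_dist _
    have hd := hLip t x.1 (p x.1) m hm1 hmsupp (extK K β₁) (extK K β₂)
      (extK_continuousOn K β₁) (extK_continuousOn K β₂)
      (hbdd _ (extK_continuousOn K β₁)) (hbdd _ (extK_continuousOn K β₂))
    have : dist (Φ β₁ x) (Φ β₂ x) =
        lam * ‖DpH t x.1 (p x.1) (pushfwd m (extK K β₁)) -
          DpH t x.1 (p x.1) (pushfwd m (extK K β₂))‖ := by
      rw [hΦapp, hΦapp, dist_eq_norm]
      rw [show -(lam • DpH t x.1 (p x.1) (pushfwd m (extK K β₁))) -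
          -(lam • DpH t x.1 (p x.1) (pushfwd m (extK K β₂))) =
          -(lam • (DpH t x.1 (p x.1) (pushfwd m (extK K β₁)) -
            DpH t x.1 (p x.1) (pushfwd m (extK K β₂)))) by
        rw [smul_sub]; abel]
      rw [norm_neg, norm_smul, Real.norm_eq_abs, abs_of_nonneg hlam0]
    rw [this]
    calc lam * ‖DpH t x.1 (p x.1) (pushfwd m (extK K β₁)) -
          DpH t x.1 (p x.1) (pushfwd m (extK K β₂))‖
        ≤ 1 * (L₁ * LqNormV q₀ m (fun y => extK K β₁ y - extK K β₂ y)) := by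
          apply mul_le_mul hlam1 hd (norm_nonneg _) zero_le_one
      _ ≤ 1 * (L₁ * dist β₁ β₂) := by
          have := mul_le_mul_of_nonneg_left hlq hL₁0.le
          linarith
      _ = L₁ * dist β₁ β₂ := one_mul _
  have hCW : ContractingWith L₁.toNNReal Φ := by
    constructor
    · exact_mod_cast Real.toNNReal_lt_one.mpr hL₁.2
    · apply LipschitzWith.of_dist_le_mul
      intro β₁ β₂
      rw [Real.coe_toNNReal _ hL₁0.le]
      exact hcontr β₁ β₂
  obtain β := ContractingWith.fixedPoint Φ hCW
  have hfix : Φ (ContractingWith.fixedPoint Φ hCW) = ContractingWith.fixedPoint Φ hCW :=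
    hCW.fixedPoint_isFixedPt
  set β := ContractingWith.fixedPoint Φ hCW with hβ
  constructor
  · -- existence
    refine ⟨extK K β, extK_continuousOn K β, ?_⟩
    intro x hx
    calc extK K β x = β ⟨x, hx⟩ := extK_apply β hx
      _ = Φ β ⟨x, hx⟩ := by rw [hfix]
      _ = -(lam • DpH t x (p x) (pushfwd m (extK K β))) := rfl
  · -- uniqueness
    intro α₁ α₂ hc1 hc2 hf1 hf2
    obtain ⟨x₀, hx₀, hmax'⟩ := hKc.exists_isMaxOn hKne (hc1.sub hc2).norm
    have hmax : ∀ y ∈ K, ‖α₁ y - α₂ y‖ ≤ ‖α₁ x₀ - α₂ x₀‖ := fun y hy => hmax' hy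
    set M := ‖α₁ x₀ - α₂ x₀‖ with hM
    have hM0 : 0 ≤ M := norm_nonneg _
    have hlq : LqNormV q₀ m (fun y => α₁ y - α₂ y) ≤ M := by
      refine lq_bound m hm1 q₀ hq₀ _ _ hM0 ?_
      filter_upwards [haeK] with y hy
      exact hmax y hy
    have hd := hLip t x₀ (p x₀) m hm1 hmsupp α₁ α₂ hc1 hc2 (hbdd _ hc1) (hbdd _ hc2)
    have hstep : M ≤ L₁ * M := by
      have heq : α₁ x₀ - α₂ x₀ =
          -(lam • (DpH t x₀ (p x₀) (pushfwd m α₁) - DpH t x₀ (p x₀) (pushfwd m α₂))) := by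
        rw [hf1 x₀ hx₀, hf2 x₀ hx₀, smul_sub]; abel
      have : M = lam * ‖DpH t x₀ (p x₀) (pushfwd m α₁) - DpH t x₀ (p x₀) (pushfwd m α₂)‖ := by
        rw [hM, heq, norm_neg, norm_smul, Real.norm_eq_abs, abs_of_nonneg hlam0]
      calc M = lam * ‖DpH t x₀ (p x₀) (pushfwd m α₁) - DpH t x₀ (p x₀) (pushfwd m α₂)‖ :=
            this
        _ ≤ 1 * (L₁ * LqNormV q₀ m (fun y => α₁ y - α₂ y)) :=
            mul_le_mul hlam1 hd (norm_nonneg _) zero_le_one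
        _ ≤ L₁ * M := by
            have := mul_le_mul_of_nonneg_left hlq hL₁0.le
            linarith
    have hMzero : M = 0 := by nlinarith [hL₁.2]
    have hEq : EqOn α₁ α₂ K := by
      intro y hy
      have := hmax y hy
      rw [hMzero] at this
      have : ‖α₁ y - α₂ y‖ = 0 := le_antisymm this (norm_nonneg _)
      have := norm_eq_zero.mp this
      exact sub_eq_zero.mp this
    refine ⟨hEq, ?_⟩
    apply Measure.map_congr
    filter_upwards [haeK] with y hy
    simp [hEq hy]
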